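/- Let p > 2, d > 0 and let F : ℝ³ → ℝ be differentiable and convex with gradient f = ∇F, satisfying F(0) = 0 and: (F4) ½⟨f(u),u⟩ > F(u) ≥ d|u|^p for every u ≠ 0; (F7) whenever ⟨f(u),v⟩ = ⟨f(v),u⟩ ≠ 0 one has F(u) − F(v) ≤ (⟨f(u),u⟩² − ⟨f(u),v⟩²)/(2⟨f(u),u⟩), with strict inequality if in addition F(u) ≠ F(v). Then for every u ∈ ℝ³ with u ≠ 0, every z ∈ ℝ³ and every t ≥ 0, the quantity φ(t) := ⟨f(u), ((t²−1)/2)·u + t·z⟩ + F(u) − F(tu + z) satisfies φ(t) ≤ 0, and φ(t) < 0 whenever t ≠ 1. -/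

import Mathlib

open scoped RealInnerProductSpace

/-- Pure arithmetic for the critical point case. -/
lemma nehari_key_arith (A B FU FW t : ℝ) (hApos : 0 < A) (hFU : 2 * FU < A)
    (hFW : 0 ≤ FW) (ht : 0 < t)
    (h1 : B ≠ 0 → FU - FW ≤ (A ^ 2 - B ^ 2) / (2 * A))
    (h2 : B ≠ 0 → FU ≠ FW → FU - FW < (A ^ 2 - B ^ 2) / (2 * A)) :
    t * B - (t ^ 2 + 1) / 2 * A + (FU - FW) ≤ 0 ∧
    (t ≠ 1 → t * B - (t ^ 2 + 1) / 2 * A + (FU - FW) < 0) := by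
  by_cases hB0 : B = 0
  · have hlt : t * B - (t ^ 2 + 1) / 2 * A + (FU - FW) < 0 := by
      rw [hB0]
      nlinarith [sq_nonneg t]
    exact ⟨hlt.le, fun _ => hlt⟩
  · have h1' := h1 hB0
    have heq : t * B - (t ^ 2 + 1) / 2 * A + (A ^ 2 - B ^ 2) / (2 * A)
        = -((B - t * A) ^ 2 / (2 * A)) := by
      field_simp
      ring
    have hsqnn : 0 ≤ (B - t * A) ^ 2 / (2 * A) := div_nonneg (sq_nonneg _) (by linarith)
    have hle : t * B - (t ^ 2 + 1) / 2 * A + (FU - FW) ≤ -((B - t * A) ^ 2 / (2 * A)) := by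
      linarith
    refine ⟨by linarith, ?_⟩
    intro htne
    by_contra hcon
    push_neg at hcon
    have hzero : t * B - (t ^ 2 + 1) / 2 * A + (FU - FW) = 0 := le_antisymm (by linarith) hcon
    have hX : (B - t * A) ^ 2 ≤ 0 := by
      by_contra h
      push_neg at h
      have := div_pos h (by linarith : (0:ℝ) < 2 * A)
      linarith
    have hXeq : B = t * A := by nlinarith [sq_nonneg (B - t * A)]
    by_cases hFuw : FU = FW
    · have h4 : (t ^ 2 - 1) / 2 * A = 0 := by rw [← hzero, hXeq, hFuw]; ring
      have h5 : t ^ 2 - 1 = 0 := by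
        rcases mul_eq_zero.mp h4 with h | h
        · linarith
        · linarith
      have h6 : (t - 1) * (t + 1) = 0 := by nlinarith
      rcases mul_eq_zero.mp h6 with h | h
      · exact htne (by linarith)
      · linarith
    · have := h2 hB0 hFuw
      linarith

/-- Pure arithmetic for the coercivity bound. -/
lemma nehari_coer_arith (A b FU FW G t : ℝ) (ht : 1 ≤ t) (hFU : 0 < FU)
    (hFW : (|A| / 2 + |b| + FU + |G| + 1) * t ^ 2 ≤ FW) :
    (t ^ 2 - 1) / 2 * A + t * b + FU - FW < G := by
  have ht2 : 1 ≤ t ^ 2 := by nlinarith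
  have h₁ : 0 ≤ (t ^ 2 - 1) * (|A| - A) :=
    mul_nonneg (by linarith) (by linarith [le_abs_self A])
  have h₂ : 0 ≤ (t ^ 2 - t) * |b| := mul_nonneg (by nlinarith) (abs_nonneg b)
  have h₂' : 0 ≤ t * (|b| - b) :=
    mul_nonneg (by linarith) (by linarith [le_abs_self b])
  have h₃ : 0 ≤ (t ^ 2 - 1) * FU := mul_nonneg (by linarith) hFU.le
  have h₄ : 0 ≤ (t ^ 2 - 1) * |G| := mul_nonneg (by linarith) (abs_nonneg G)
  have h₅ : 0 ≤ |G| + G := by linarith [neg_abs_le G]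
  have h₀ : 0 ≤ |A| := abs_nonneg A
  nlinarith [h₁, h₂, h₂', h₃, h₄, h₅, h₀, ht2]

/-- Gradient inequality for a convex differentiable function. -/
lemma nehari_grad_convex_ineq {F : EuclideanSpace ℝ (Fin 3) → ℝ}
    {f : EuclideanSpace ℝ (Fin 3) → EuclideanSpace ℝ (Fin 3)}
    (hFdiff : ∀ u, HasGradientAt F (f u) u) (hFconv : ConvexOn ℝ Set.univ F)
    (x y : EuclideanSpace ℝ (Fin 3)) : F x + ⟪f x, y - x⟫ ≤ F y := by
  set g : ℝ → ℝ := fun s => F (s • (y - x) + x) with hg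
  have hgc : ConvexOn ℝ Set.univ g := by
    have h := hFconv.comp_affineMap (AffineMap.lineMap x y)
    rw [Set.preimage_univ] at h
    have he : g = F ∘ (AffineMap.lineMap x y : ℝ →ᵃ[ℝ] EuclideanSpace ℝ (Fin 3)) := by
      funext s
      simp [hg, AffineMap.lineMap_apply]
    rw [he]
    exact h
  have hc : HasDerivAt (fun s : ℝ => s • (y - x) + x) (y - x) 0 := by
    simpa using ((hasDerivAt_id (0:ℝ)).smul_const (y - x)).add_const x
  have hgd : HasDerivAt g ⟪f x, y - x⟫ 0 := by
    have h := (hFdiff ((0:ℝ) • (y - x) + x)).hasFDerivAt.comp_hasDerivAt 0 hc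
    simp only [zero_smul, zero_add] at h
    exact h
  have hslope := hgc.le_slope_of_hasDerivAt (Set.mem_univ (0:ℝ)) (Set.mem_univ (1:ℝ))
    one_pos hgd
  rw [slope_def_field] at hslope
  simp only [hg, one_smul, zero_smul, sub_add_cancel, zero_add, sub_zero, div_one] at hslope
  linarith

/-- For `F` convex, differentiable with gradient `f`, `F(0) = 0`, satisfying
(F4) and (F7), the quantity `φ(t) = ⟨f(u), ((t²−1)/2)u + tz⟩ + F(u) − F(tu+z)` satisfies
`φ(t) ≤ 0` for all `t ≥ 0`, with strict inequality when `t ≠ 1`, whenever `u ≠ 0`. -/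
theorem nehari_key_inequality (p d : ℝ) (hp : 2 < p) (hd : 0 < d)
    (F : EuclideanSpace ℝ (Fin 3) → ℝ)
    (f : EuclideanSpace ℝ (Fin 3) → EuclideanSpace ℝ (Fin 3))
    (hFdiff : ∀ u, HasGradientAt F (f u) u)
    (hFconv : ConvexOn ℝ Set.univ F)
    (hF0 : F 0 = 0)
    -- (F4)
    (hF4 : ∀ u : EuclideanSpace ℝ (Fin 3), u ≠ 0 →
      d * ‖u‖ ^ p ≤ F u ∧ F u < (1 / 2) * ⟪f u, u⟫)
    -- (F7)
    (hF7 : ∀ u v : EuclideanSpace ℝ (Fin 3),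
      ⟪f u, v⟫ = ⟪f v, u⟫ → ⟪f u, v⟫ ≠ 0 →
      F u - F v ≤ (⟪f u, u⟫ ^ 2 - ⟪f u, v⟫ ^ 2) / (2 * ⟪f u, u⟫) ∧
      (F u ≠ F v →
        F u - F v < (⟪f u, u⟫ ^ 2 - ⟪f u, v⟫ ^ 2) / (2 * ⟪f u, u⟫))) :
    ∀ u : EuclideanSpace ℝ (Fin 3), u ≠ 0 →
      ∀ (z : EuclideanSpace ℝ (Fin 3)) (t : ℝ), 0 ≤ t →
        ⟪f u, ((t ^ 2 - 1) / 2) • u + t • z⟫ + F u - F (t • u + z) ≤ 0 ∧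
        (t ≠ 1 →
          ⟪f u, ((t ^ 2 - 1) / 2) • u + t • z⟫ + F u - F (t • u + z) < 0) := by
  intro u hu z
  have hFnonneg : ∀ v, 0 ≤ F v := by
    intro v
    rcases eq_or_ne v 0 with rfl | hv
    · exact le_of_eq hF0.symm
    · exact le_trans (by positivity) (hF4 v hv).1
  have hu0 : 0 < ‖u‖ := norm_pos_iff.mpr hu
  have hFu : 0 < F u := lt_of_lt_of_le (by positivity) (hF4 u hu).1
  have hA : 2 * F u < ⟪f u, u⟫ := by have := (hF4 u hu).2; linarith
  have hApos : 0 < ⟪f u, u⟫ := by linarith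
  set ψ : ℝ → ℝ := fun s =>
    (s ^ 2 - 1) / 2 * ⟪f u, u⟫ + s * ⟪f u, z⟫ + F u - F (s • u + z) with hψdef
  have hψa : ∀ s : ℝ, ψ s =
      (s ^ 2 - 1) / 2 * ⟪f u, u⟫ + s * ⟪f u, z⟫ + F u - F (s • u + z) := fun s => rfl
  have hpt : ∀ s : ℝ, ⟪f u, ((s ^ 2 - 1) / 2) • u + s • z⟫
      = (s ^ 2 - 1) / 2 * ⟪f u, u⟫ + s * ⟪f u, z⟫ := by
    intro s
    simp only [inner_add_right, real_inner_smul_right]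
  have hψderiv : ∀ s : ℝ, HasDerivAt ψ
      (s * ⟪f u, u⟫ + ⟪f u, z⟫ - ⟪f (s • u + z), u⟫) s := by
    intro s
    have hc : HasDerivAt (fun r : ℝ => r • u + z) u s := by
      simpa using ((hasDerivAt_id s).smul_const u).add_const z
    have hdF : HasDerivAt (fun r : ℝ => F (r • u + z)) ⟪f (s • u + z), u⟫ s := by
      have h := (hFdiff (s • u + z)).hasFDerivAt.comp_hasDerivAt s hc
      exact h
    have hpoly : HasDerivAt (fun r : ℝ => (r ^ 2 - 1) / 2 * ⟪f u, u⟫ + r * ⟪f u, z⟫ + F u)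
        (s * ⟪f u, u⟫ + ⟪f u, z⟫) s := by
      have h := ((((hasDerivAt_pow 2 s).sub_const 1).div_const 2).mul_const
        (⟪f u, u⟫ : ℝ)).add (((hasDerivAt_id s).mul_const (⟪f u, z⟫ : ℝ))) |>.add_const (F u)
      exact h.congr_deriv (by simp)
    rw [hψdef]
    exact hpoly.sub hdF
  have hψdiff : Differentiable ℝ ψ := fun s => (hψderiv s).differentiableAt
  have hψcont : Continuous ψ := hψdiff.continuous
  have hψ0 : ψ 0 < 0 := by
    rw [hψa 0]
    have h1 : (0:ℝ) • u + z = z := by rw [zero_smul, zero_add]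
    rw [h1]
    have := hFnonneg z
    nlinarith
  have hψ1 : ψ 1 ≤ 0 := by
    have hgrad := nehari_grad_convex_ineq hFdiff hFconv u (u + z)
    rw [add_sub_cancel_left] at hgrad
    rw [hψa 1, one_smul]
    nlinarith
  -- key fact at critical points
  have hkey : ∀ t₀ : ℝ, 0 < t₀ →
      t₀ * ⟪f u, u⟫ + ⟪f u, z⟫ - ⟪f (t₀ • u + z), u⟫ = 0 →
      ψ t₀ ≤ 0 ∧ (t₀ ≠ 1 → ψ t₀ < 0) := by
    intro t₀ ht₀ hcrit
    have hB : ⟪f u, t₀ • u + z⟫ = t₀ * ⟪f u, u⟫ + ⟪f u, z⟫ := by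
      simp only [inner_add_right, real_inner_smul_right]
    have hsym : ⟪f u, t₀ • u + z⟫ = ⟪f (t₀ • u + z), u⟫ := by rw [hB]; linarith
    have hval : ψ t₀ = t₀ * ⟪f u, t₀ • u + z⟫ - (t₀ ^ 2 + 1) / 2 * ⟪f u, u⟫
        + (F u - F (t₀ • u + z)) := by
      rw [hψa t₀, hB]; ring
    have hk := nehari_key_arith ⟪f u, u⟫ ⟪f u, t₀ • u + z⟫ (F u) (F (t₀ • u + z)) t₀
      hApos hA (hFnonneg _) ht₀
      (fun hB0 => (hF7 u (t₀ • u + z) hsym hB0).1)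
      (fun hB0 hne => (hF7 u (t₀ • u + z) hsym hB0).2 hne)
    rw [← hval] at hk
    exact hk
  -- coercivity
  have hbound : ∀ G : ℝ, ∃ T : ℝ, ∀ t ≥ T, ψ t < G := by
    intro G
    have hp2 : (0:ℝ) < p - 2 := by linarith
    have hppos : (0:ℝ) < p := by linarith
    set K : ℝ := d * (‖u‖ / 2) ^ p with hK
    have hKpos : 0 < K := mul_pos hd (Real.rpow_pos_of_pos (by linarith) p)
    set M : ℝ := |(⟪f u, u⟫ : ℝ)| / 2 + |(⟪f u, z⟫ : ℝ)| + F u + |G| + 1 with hM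
    have hMpos : 0 < M := by
      rw [hM]
      have := abs_nonneg (⟪f u, u⟫ : ℝ)
      have := abs_nonneg (⟪f u, z⟫ : ℝ)
      have := abs_nonneg G
      linarith
    have hev1 : ∀ᶠ t : ℝ in Filter.atTop, M / K ≤ t ^ (p - 2) :=
      (tendsto_rpow_atTop hp2).eventually_ge_atTop _
    have hev2 : ∀ᶠ t : ℝ in Filter.atTop, max 1 (2 * ‖z‖ / ‖u‖) ≤ t :=
      Filter.eventually_ge_atTop _
    obtain ⟨T, hT⟩ := Filter.eventually_atTop.mp (hev1.and hev2)
    refine ⟨T, fun t ht => ?_⟩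
    obtain ⟨h1, h2⟩ := hT t ht
    have ht1 : 1 ≤ t := le_trans (le_max_left _ _) h2
    have ht0 : 0 < t := by linarith
    have hz2 : ‖z‖ ≤ t * ‖u‖ / 2 := by
      have h3 := le_trans (le_max_right _ _) h2
      rw [div_le_iff₀ hu0] at h3
      linarith
    have hnw : t * ‖u‖ / 2 ≤ ‖t • u + z‖ := by
      have h3 : ‖t • u‖ - ‖-z‖ ≤ ‖t • u - -z‖ := norm_sub_norm_le _ _
      rw [norm_smul] at h3
      simp only [sub_neg_eq_add, norm_neg] at h3
      rw [Real.norm_eq_abs, abs_of_pos ht0] at h3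
      linarith
    have hwne : t • u + z ≠ 0 := by
      intro h
      rw [h, norm_zero] at hnw
      nlinarith
    have hFw : K * t ^ p ≤ F (t • u + z) := by
      have h4 := (hF4 _ hwne).1
      have h5 : (t * (‖u‖ / 2)) ^ p ≤ ‖t • u + z‖ ^ p :=
        Real.rpow_le_rpow (by positivity) (by linarith) hppos.le
      rw [Real.mul_rpow ht0.le (by positivity)] at h5
      calc K * t ^ p = d * (t ^ p * (‖u‖ / 2) ^ p) := by rw [hK]; ring
        _ ≤ d * ‖t • u + z‖ ^ p := by
            exact mul_le_mul_of_nonneg_left h5 hd.le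
        _ ≤ F (t • u + z) := h4
    have htp : t ^ p = t ^ (p - 2) * t ^ 2 := by
      rw [← Real.rpow_natCast t 2, ← Real.rpow_add ht0]
      norm_num
    have hFW2 : M * t ^ 2 ≤ F (t • u + z) := by
      calc M * t ^ 2 = K * (M / K) * t ^ 2 := by field_simp
        _ ≤ K * t ^ (p - 2) * t ^ 2 := by
            have := mul_le_mul_of_nonneg_left h1 hKpos.le
            nlinarith [sq_nonneg t]
        _ = K * t ^ p := by rw [htp]; ring
        _ ≤ F (t • u + z) := hFw
    rw [hψa t]
    exact nehari_coer_arith ⟪f u, u⟫ ⟪f u, z⟫ (F u) (F (t • u + z)) G t ht1 hFu hFW2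
  -- the main claim
  have hclaim : ∀ s : ℝ, 0 ≤ s → s ≠ 1 → ψ s < 0 := by
    intro s hs hsne
    by_contra hcon
    push_neg at hcon
    have hs0 : s ≠ 0 := by
      intro h
      rw [h] at hcon
      linarith
    have hspos : 0 < s := lt_of_le_of_ne hs (Ne.symm hs0)
    obtain ⟨T₀, hT₀⟩ := hbound (ψ s)
    set T : ℝ := max T₀ (s + 1) with hTdef
    have hsT : s < T := lt_of_lt_of_le (by linarith) (le_max_right _ _)
    have hTbig : ∀ r ≥ T, ψ r < ψ s := fun r hr => hT₀ r (le_trans (le_max_left _ _) hr)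
    have hTpos : 0 < T := lt_trans hspos hsT
    obtain ⟨t₀, ht₀mem, ht₀max⟩ := isCompact_Icc.exists_isMaxOn
      (Set.nonempty_Icc.mpr hTpos.le) hψcont.continuousOn
    have ht₀max' : ∀ r ∈ Set.Icc (0:ℝ) T, ψ r ≤ ψ t₀ := isMaxOn_iff.mp ht₀max
    have hψsle : ψ s ≤ ψ t₀ := ht₀max' s ⟨hs, hsT.le⟩
    have hglob : ∀ r : ℝ, 0 ≤ r → ψ r ≤ ψ t₀ := by
      intro r hr
      rcases le_or_gt r T with h | h
      · exact ht₀max' r ⟨hr, h⟩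
      · have := hTbig r h.le
        linarith
    have ht₀pos : 0 < t₀ := by
      rcases eq_or_lt_of_le ht₀mem.1 with h | h
      · exfalso
        rw [← h] at hψsle
        linarith
      · exact h
    have hloc : IsLocalMax ψ t₀ :=
      Filter.eventually_of_mem (isOpen_Ioi.mem_nhds ht₀pos)
        (fun r hr => hglob r (le_of_lt hr))
    have hd0 := hloc.hasDerivAt_eq_zero (hψderiv t₀)
    obtain ⟨hk1, hk2⟩ := hkey t₀ ht₀pos hd0
    have ht₀1 : t₀ = 1 := by
      by_contra h
      have := hk2 h
      linarith
    have hψt₀0 : ψ t₀ = 0 := le_antisymm hk1 (by linarith)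
    have hψs0 : ψ s = 0 := le_antisymm (by linarith) hcon
    have hlocs : IsLocalMax ψ s :=
      Filter.eventually_of_mem (isOpen_Ioi.mem_nhds hspos)
        (fun r hr => by
          have := hglob r (le_of_lt hr)
          rw [hψs0]
          linarith)
    have hds := hlocs.hasDerivAt_eq_zero (hψderiv s)
    obtain ⟨_, hk2s⟩ := hkey s hspos hds
    have := hk2s hsne
    linarith
  intro t ht
  rw [hpt t, ← hψa t]
  rcases eq_or_ne t 1 with rfl | hne
  · exact ⟨hψ1, fun h => absurd rfl h⟩
  · have := hclaim t ht hne
    exact ⟨this.le, fun _ => this⟩
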